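/- The operator T defined by Th(t) = χ_{(0,1)}(t) · t φ_β(t) · ∫_t^1 h(s)/(s² φ_β(s)) ds is bounded on L¹(0,∞) with norm at most n/(n+β), and bounded on L^∞(0,∞) with norm at most n/β. -/

import Mathlib

open MeasureTheory Set Real
open scoped ENNReal Interval

noncomputable def phi (n : ℕ) (β : ℝ) (t : ℝ) : ℝ := min (t ^ (-1 + β / n)) t⁻¹

/-- The auxiliary operator `T h(t) = χ_{(0,1)}(t) t φ_β(t) ∫_t^1 h(s)/(s² φ_β(s)) ds`. -/
noncomputable def Taux (n : ℕ) (β : ℝ) (h : ℝ → ℝ) (t : ℝ) : ℝ :=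
  if t ∈ Ioo (0 : ℝ) 1 then t * phi n β t * ∫ s in Ioo t 1, h s / (s ^ 2 * phi n β s)
  else 0

section aux

variable {n : ℕ} {β : ℝ}

lemma phi_eq (hβ : 0 ≤ β / n) {t : ℝ} (ht : t ∈ Ioo (0:ℝ) 1) :
    phi n β t = t ^ (-1 + β / n) := by
  have h1 : t ^ (-1 + β / n) ≤ t ^ (-1 : ℝ) :=
    Real.rpow_le_rpow_of_exponent_ge ht.1 ht.2.le (by linarith)
  rw [phi, min_eq_left]
  rwa [← Real.rpow_neg_one t]

lemma t_mul_phi (hβ : 0 < β / n) {t : ℝ} (ht : t ∈ Ioo (0:ℝ) 1) :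
    t * phi n β t = t ^ (β / n) := by
  rw [phi_eq hβ.le ht, ← Real.rpow_one_add' ht.1.le (by simp [hβ.ne'])]
  congr 1; ring

lemma sq_mul_phi (hβ : 0 ≤ β / n) {s : ℝ} (hs : s ∈ Ioo (0:ℝ) 1) :
    s ^ 2 * phi n β s = s ^ (1 + β / n) := by
  rw [phi_eq hβ hs, ← Real.rpow_natCast s 2, ← Real.rpow_add hs.1]
  congr 1; push_cast; ring

lemma tonelli_aux (g k : ℝ → ℝ≥0∞) (hg : Measurable g) (hk : Measurable k) :
    (∫⁻ t in Ioo (0:ℝ) 1, g t * ∫⁻ s in Ioo t 1, k s) =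
      ∫⁻ s in Ioo (0:ℝ) 1, k s * ∫⁻ t in Ioo 0 s, g t := by
  set S : Set (ℝ × ℝ) := {p : ℝ × ℝ | 0 < p.1 ∧ p.1 < p.2 ∧ p.2 < 1} with hSdef
  have hS : MeasurableSet S :=
    (measurableSet_lt measurable_const measurable_fst).inter
      ((measurableSet_lt measurable_fst measurable_snd).inter
        (measurableSet_lt measurable_snd measurable_const))
  set F : ℝ × ℝ → ℝ≥0∞ := fun p => S.indicator (fun q => g q.1 * k q.2) p with hFdef
  have hF : Measurable F :=
    Measurable.indicator ((hg.comp measurable_fst).mul (hk.comp measurable_snd)) hS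
  have h1 : ∀ t, (∫⁻ s, F (t, s)) =
      (Ioo (0:ℝ) 1).indicator (fun t => g t * ∫⁻ s in Ioo t 1, k s) t := by
    intro t
    by_cases ht : t ∈ Ioo (0:ℝ) 1
    · rw [indicator_of_mem ht]
      have he : ∀ s, F (t, s) = (Ioo t 1).indicator (fun s => g t * k s) s := by
        intro s
        simp only [hFdef, indicator_apply, hSdef, mem_setOf_eq, mem_Ioo]
        by_cases hs : t < s ∧ s < 1
        · rw [if_pos hs, if_pos ⟨ht.1, hs⟩]
        · rw [if_neg hs, if_neg (fun hc => hs hc.2)]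
      simp_rw [he]
      rw [lintegral_indicator measurableSet_Ioo, lintegral_const_mul _ hk]
    · rw [indicator_of_notMem ht]
      have he : ∀ s, F (t, s) = 0 := by
        intro s
        simp only [hFdef, indicator_apply, hSdef, mem_setOf_eq]
        exact if_neg fun hc => ht ⟨hc.1, lt_trans hc.2.1 hc.2.2⟩
      simp [he]
  have h2 : ∀ s, (∫⁻ t, F (t, s)) =
      (Ioo (0:ℝ) 1).indicator (fun s => k s * ∫⁻ t in Ioo 0 s, g t) s := by
    intro s
    by_cases hs : s ∈ Ioo (0:ℝ) 1
    · rw [indicator_of_mem hs]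
      have he : ∀ t, F (t, s) = (Ioo 0 s).indicator (fun t => g t * k s) t := by
        intro t
        simp only [hFdef, indicator_apply, hSdef, mem_setOf_eq, mem_Ioo]
        by_cases ht : 0 < t ∧ t < s
        · rw [if_pos ht, if_pos ⟨ht.1, ht.2, hs.2⟩]
        · rw [if_neg ht, if_neg (fun hc => ht ⟨hc.1, hc.2.1⟩)]
      simp_rw [he]
      rw [lintegral_indicator measurableSet_Ioo, lintegral_mul_const _ hg, mul_comm]
    · rw [indicator_of_notMem hs]
      have he : ∀ t, F (t, s) = 0 := by
        intro t
        simp only [hFdef, indicator_apply, hSdef, mem_setOf_eq]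
        exact if_neg fun hc => hs ⟨lt_trans hc.1 hc.2.1, hc.2.2⟩
      simp [he]
  calc (∫⁻ t in Ioo (0:ℝ) 1, g t * ∫⁻ s in Ioo t 1, k s)
      = ∫⁻ t, (Ioo (0:ℝ) 1).indicator (fun t => g t * ∫⁻ s in Ioo t 1, k s) t :=
        (lintegral_indicator measurableSet_Ioo _).symm
    _ = ∫⁻ t, ∫⁻ s, F (t, s) := by simp_rw [h1]
    _ = ∫⁻ s, ∫⁻ t, F (t, s) := lintegral_lintegral_swap hF.aemeasurable
    _ = ∫⁻ s, (Ioo (0:ℝ) 1).indicator (fun s => k s * ∫⁻ t in Ioo 0 s, g t) s := by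
        simp_rw [h2]
    _ = ∫⁻ s in Ioo (0:ℝ) 1, k s * ∫⁻ t in Ioo 0 s, g t :=
        lintegral_indicator measurableSet_Ioo _

lemma lint_rpow_A {a t : ℝ} (ha : 0 < a) (ht : t ∈ Ioo (0:ℝ) 1) :
    (∫⁻ s in Ioo t 1, ENNReal.ofReal (s ^ (-(1+a)))) =
      ENNReal.ofReal ((t ^ (-a) - 1) / a) := by
  have h0 : (0:ℝ) ∉ [[t, 1]] := by
    rw [uIcc_of_le ht.2.le]
    intro hc; exact absurd hc.1 (not_le.mpr ht.1)
  have hInt : IntegrableOn (fun s : ℝ => s ^ (-(1+a))) (Ioo t 1) volume :=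
    (intervalIntegral.intervalIntegrable_rpow (Or.inr h0)).1.mono_set Ioo_subset_Ioc_self
  rw [← ofReal_integral_eq_lintegral_ofReal hInt]
  · rw [← integral_Ioc_eq_integral_Ioo, ← intervalIntegral.integral_of_le ht.2.le,
      integral_rpow (Or.inr ⟨by intro hc; nlinarith, h0⟩)]
    congr 1
    have he : -(1+a) + 1 = -a := by ring
    rw [he, Real.one_rpow]
    ring
  · filter_upwards [ae_restrict_mem measurableSet_Ioo] with s hs
    exact Real.rpow_nonneg (le_trans ht.1.le hs.1.le) _

lemma lint_rpow_B {a s : ℝ} (ha : 0 < a) (hs0 : 0 < s) :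
    (∫⁻ t in Ioo (0:ℝ) s, ENNReal.ofReal (t ^ a)) =
      ENNReal.ofReal (s ^ (a+1) / (a+1)) := by
  have hInt : IntegrableOn (fun t : ℝ => t ^ a) (Ioo 0 s) volume :=
    (intervalIntegral.intervalIntegrable_rpow' (by linarith)).1.mono_set Ioo_subset_Ioc_self
  rw [← ofReal_integral_eq_lintegral_ofReal hInt]
  · rw [← integral_Ioc_eq_integral_Ioo, ← intervalIntegral.integral_of_le hs0.le,
      integral_rpow (Or.inl (by linarith))]
    congr 1
    rw [Real.zero_rpow (by linarith)]
    ring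
  · filter_upwards [ae_restrict_mem measurableSet_Ioo] with t ht
    exact Real.rpow_nonneg ht.1.le _

end aux

theorem stmt13 (n : ℕ) (hn : 2 ≤ n) (β : ℝ) (hβ0 : 0 < β) (hβn : β < n)
    (h : ℝ → ℝ) (hh : Measurable h) :
    eLpNorm (Taux n β h) 1 (volume.restrict (Ioi 0)) ≤
        ENNReal.ofReal ((n : ℝ) / (n + β)) * eLpNorm h 1 (volume.restrict (Ioi 0)) ∧
      eLpNorm (Taux n β h) ⊤ (volume.restrict (Ioi 0)) ≤
        ENNReal.ofReal ((n : ℝ) / β) * eLpNorm h ⊤ (volume.restrict (Ioi 0)) := by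
  have hn0 : (0:ℝ) < n := by positivity
  set a : ℝ := β / n with hadef
  have ha : 0 < a := div_pos hβ0 hn0
  set k : ℝ → ℝ≥0∞ := fun s => (‖h s‖₊ : ℝ≥0∞) * ENNReal.ofReal (s ^ (-(1+a))) with hkdef
  have hk : Measurable k := by
    apply Measurable.mul hh.nnnorm.coe_nnreal_ennreal
    measurability
  have hg : Measurable fun t : ℝ => ENNReal.ofReal (t ^ a) := by measurability
  have key : ∀ t ∈ Ioo (0:ℝ) 1, (‖Taux n β h t‖₊ : ℝ≥0∞) ≤
      ENNReal.ofReal (t ^ a) * ∫⁻ s in Ioo t 1, k s := by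
    intro t ht
    rw [Taux, if_pos ht, t_mul_phi ha ht, nnnorm_mul, ENNReal.coe_mul,
      ← enorm_eq_nnnorm, Real.enorm_eq_ofReal (Real.rpow_nonneg ht.1.le _)]
    refine mul_le_mul_right ?_ _
    calc (‖∫ s in Ioo t 1, h s / (s ^ 2 * phi n β s)‖₊ : ℝ≥0∞)
        ≤ ∫⁻ s in Ioo t 1, ‖h s / (s ^ 2 * phi n β s)‖₊ :=
          enorm_integral_le_lintegral_enorm _
      _ = ∫⁻ s in Ioo t 1, k s := by
          refine setLIntegral_congr_fun measurableSet_Ioo (fun s hs => ?_)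
          have hs01 : s ∈ Ioo (0:ℝ) 1 := ⟨lt_trans ht.1 hs.1, hs.2⟩
          rw [sq_mul_phi ha.le hs01, div_eq_mul_inv, nnnorm_mul, ENNReal.coe_mul,
            ← Real.rpow_neg hs01.1.le,
            ← enorm_eq_nnnorm (s ^ (-(1 + β / (n:ℝ)))), Real.enorm_eq_ofReal (Real.rpow_nonneg hs01.1.le _)]
  constructor
  · -- L¹ bound
    rw [eLpNorm_one_eq_lintegral_enorm, eLpNorm_one_eq_lintegral_enorm]
    have hind : ∀ t : ℝ, (‖Taux n β h t‖₊ : ℝ≥0∞) =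
        (Ioo (0:ℝ) 1).indicator (fun t => (‖Taux n β h t‖₊ : ℝ≥0∞)) t := by
      intro t
      by_cases ht : t ∈ Ioo (0:ℝ) 1
      · rw [indicator_of_mem ht]
      · rw [indicator_of_notMem ht, Taux, if_neg ht]
        simp
    calc (∫⁻ t in Ioi 0, (‖Taux n β h t‖₊ : ℝ≥0∞)) =
        ∫⁻ t in Ioo (0:ℝ) 1, (‖Taux n β h t‖₊ : ℝ≥0∞) := by
          rw [lintegral_congr hind, lintegral_indicator measurableSet_Ioo,
            Measure.restrict_restrict measurableSet_Ioo,
            inter_eq_self_of_subset_left (fun x hx => hx.1)]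
      _ ≤ ∫⁻ t in Ioo (0:ℝ) 1, ENNReal.ofReal (t ^ a) * ∫⁻ s in Ioo t 1, k s := by
          refine lintegral_mono_ae ?_
          filter_upwards [ae_restrict_mem measurableSet_Ioo] with t ht
          exact key t ht
      _ = ∫⁻ s in Ioo (0:ℝ) 1, k s * ∫⁻ t in Ioo 0 s, ENNReal.ofReal (t ^ a) :=
          tonelli_aux _ k hg hk
      _ = ∫⁻ s in Ioo (0:ℝ) 1, (‖h s‖₊ : ℝ≥0∞) * ENNReal.ofReal (1 / (a+1)) := by
          refine setLIntegral_congr_fun measurableSet_Ioo (fun s hs => ?_)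
          rw [lint_rpow_B ha hs.1, hkdef, mul_assoc,
            ← ENNReal.ofReal_mul (Real.rpow_nonneg hs.1.le _), mul_div_assoc',
            ← Real.rpow_add hs.1, show -(1+a) + (a+1) = 0 by ring, Real.rpow_zero]
      _ = ENNReal.ofReal (1 / (a+1)) * ∫⁻ s in Ioo (0:ℝ) 1, (‖h s‖₊ : ℝ≥0∞) := by
          rw [lintegral_mul_const _ hh.nnnorm.coe_nnreal_ennreal, mul_comm]
      _ ≤ ENNReal.ofReal ((n : ℝ) / (n + β)) * ∫⁻ s in Ioi 0, (‖h s‖₊ : ℝ≥0∞) := by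
          have h1 : 1 / (a+1) = (n : ℝ) / (n + β) := by
            rw [hadef, div_add_one hn0.ne', one_div_div, add_comm β (n:ℝ)]
          rw [h1]
          exact mul_le_mul_right (lintegral_mono_set fun x hx => hx.1) _
  · -- L∞ bound
    rw [eLpNorm_exponent_top, eLpNorm_exponent_top]
    have hc : (0:ℝ) < (n : ℝ) / β := by positivity
    by_cases hM : eLpNormEssSup h (volume.restrict (Ioi 0)) = ⊤
    · rw [hM, ENNReal.mul_top (ENNReal.ofReal_pos.mpr hc).ne']
      exact le_top
    · set M := eLpNormEssSup h (volume.restrict (Ioi 0)) with hMdef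
      have hae : ∀ᵐ s ∂(volume.restrict (Ioi (0:ℝ))), (‖h s‖₊ : ℝ≥0∞) ≤ M :=
        ae_le_eLpNormEssSup
      have bound : ∀ t, (‖Taux n β h t‖₊ : ℝ≥0∞) ≤ ENNReal.ofReal ((n : ℝ) / β) * M := by
        intro t
        by_cases ht : t ∈ Ioo (0:ℝ) 1
        · refine (key t ht).trans ?_
          have hae' : ∀ᵐ s ∂(volume.restrict (Ioo t 1)), (‖h s‖₊ : ℝ≥0∞) ≤ M :=
            ae_restrict_of_ae_restrict_of_subset (fun s hs => lt_trans ht.1 hs.1) hae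
          have h2 : (∫⁻ s in Ioo t 1, k s) ≤ M * ENNReal.ofReal ((t ^ (-a) - 1) / a) := by
            calc (∫⁻ s in Ioo t 1, k s)
                ≤ ∫⁻ s in Ioo t 1, M * ENNReal.ofReal (s ^ (-(1+a))) := by
                  refine lintegral_mono_ae ?_
                  filter_upwards [hae'] with s hs
                  exact mul_le_mul_left hs _
              _ = M * ∫⁻ s in Ioo t 1, ENNReal.ofReal (s ^ (-(1+a))) :=
                  lintegral_const_mul' _ _ hM
              _ = M * ENNReal.ofReal ((t ^ (-a) - 1) / a) := by rw [lint_rpow_A ha ht]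
          calc ENNReal.ofReal (t ^ a) * ∫⁻ s in Ioo t 1, k s
              ≤ ENNReal.ofReal (t ^ a) * (M * ENNReal.ofReal ((t ^ (-a) - 1) / a)) :=
                mul_le_mul_right h2 _
            _ = M * (ENNReal.ofReal (t ^ a) * ENNReal.ofReal ((t ^ (-a) - 1) / a)) := by
                ring
            _ = M * ENNReal.ofReal (t ^ a * ((t ^ (-a) - 1) / a)) := by
                rw [ENNReal.ofReal_mul (Real.rpow_nonneg ht.1.le _)]
            _ ≤ M * ENNReal.ofReal ((n : ℝ) / β) := by
                refine mul_le_mul_right (ENNReal.ofReal_le_ofReal ?_) _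
                have he : t ^ a * ((t ^ (-a) - 1) / a) = (1 - t ^ a) / a := by
                  rw [mul_div_assoc', mul_sub, ← Real.rpow_add ht.1, mul_one]
                  norm_num
                have hb : (n : ℝ) / β = 1 / a := by
                  rw [hadef, one_div_div]
                rw [he, hb]
                have hta : 0 ≤ t ^ a := Real.rpow_nonneg ht.1.le _
                gcongr
                linarith
            _ = ENNReal.ofReal ((n : ℝ) / β) * M := mul_comm _ _
        · rw [Taux, if_neg ht]
          simp
      exact essSup_le_of_ae_le _ (ae_of_all _ bound)
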